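/- arXiv:2101.10692 — 3 statements merged into one kernel-verified Lean document; each statement's English description precedes it below -/
import Mathlib

section
/- Relation between dictionary and difference operator. Fix n ≥ 2 and k ∈ {1,…,n−1}. Then D^k φ^k_j = D^k φ̃^k_j = 0 for every j ∈ {1,…,k}, and D^k φ^k_j = D^k φ̃^k_j = 1_{{j}} (the vector in ℝ^{n−k}, indexed by {k+1,…,n}, equal to 1 at position j and 0 elsewhere) for every j ∈ {k+1,…,n}. -/
open Finset

noncomputable section

namespace VitaliTV

/-- Auxiliary recursion for the one-dimensional dictionary: `phiHigh n k j` is the dictionary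
vector `φ^k_j` for `j` in the "high" range `{k, …, n}` (indices are 1-based; the entry at
`j' : Fin n` corresponds to the 1-based index `j' + 1`).  `phiHigh n 1 j = 1{· ≥ j}` and
`phiHigh n k j = (1/n) ∑_{l = j}^{n} phiHigh n (k-1) l`. -/
def phiHigh (n : ℕ) : ℕ → ℕ → Fin n → ℝ
  | 0, _ => fun _ => 0
  | 1, j => fun j' => if j ≤ (j' : ℕ) + 1 then 1 else 0
  | (k + 2), j => fun j' => (1 / (n : ℝ)) * ∑ l ∈ Finset.Icc j n, phiHigh n (k + 1) l j'

/-- The original one-dimensional dictionary: `phi n k j = φ^k_j`, with `φ^k_j := φ^j_j` for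
`j ∈ {1, …, k-1}` and `φ^k_j := (1/n) ∑_{l ≥ j} φ^{k-1}_l` for `j ∈ {k, …, n}`. -/
def phi (n k j : ℕ) : EuclideanSpace ℝ (Fin n) :=
  if j ≤ k - 1 then WithLp.toLp 2 (phiHigh n j j) else WithLp.toLp 2 (phiHigh n k j)

/-- Antiprojection operator: `AW W v` is the orthogonal projection of `v` onto `Wᗮ`. -/
def AW {E : Type*} [NormedAddCommGroup E] [InnerProductSpace ℝ E] [FiniteDimensional ℝ E]
    (W : Submodule ℝ E) (v : E) : E :=
  (Submodule.orthogonalProjection Wᗮ v : E)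

/-- The span `V_m` of `{φ^l_l : l ∈ {1, …, m}}`. -/
def Vspan (n m : ℕ) : Submodule ℝ (EuclideanSpace ℝ (Fin n)) :=
  Submodule.span ℝ {v | ∃ l ∈ Finset.Icc 1 m, v = phi n l l}

/-- The partially orthonormalized one-dimensional dictionary `φ̃^k_j`. -/
def phiTil (n k j : ℕ) : EuclideanSpace ℝ (Fin n) :=
  if j ≤ k then
    (Real.sqrt n / ‖AW (Vspan n (j - 1)) (phi n j j)‖) • AW (Vspan n (j - 1)) (phi n j j)
  else AW (Vspan n k) (phi n k j)

/-- The one-dimensional `k`-th order difference operator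
`(D^k f)_j = n^{k−1} ∑_{l=0}^{k} (−1)^l binom(k,l) f_{j−l}` for (1-based) `j ∈ {k+1,…,n}`;
the output entry at `j : Fin (n−k)` corresponds to the 1-based index `j + k + 1`. -/
def D1 (n k : ℕ) (f : EuclideanSpace ℝ (Fin n)) : EuclideanSpace ℝ (Fin (n - k)) :=
  WithLp.toLp 2 fun (j : Fin (n - k)) => (n : ℝ) ^ (k - 1) *
    ∑ l ∈ Finset.range (k + 1),
      (-1 : ℝ) ^ l * (Nat.choose k l : ℝ) * f ⟨(j : ℕ) + k - l, by have := j.isLt; omega⟩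

/-! ### Auxiliary lemmas -/

/-- Pure real-number Pascal identity for the alternating sums. -/
lemma sum_pascal (g : ℕ → ℝ) (k m : ℕ) (hm : k + 1 ≤ m) :
    ∑ l ∈ Finset.range (k + 2), (-1 : ℝ) ^ l * (Nat.choose (k+1) l : ℝ) * g (m - l)
      = (∑ l ∈ Finset.range (k + 1), (-1 : ℝ) ^ l * (Nat.choose k l : ℝ) * g (m - l))
        - ∑ l ∈ Finset.range (k + 1), (-1 : ℝ) ^ l * (Nat.choose k l : ℝ) * g (m - 1 - l) := by
  rw [Finset.sum_range_succ' _ (k+1), Finset.sum_range_succ' (fun l => (-1:ℝ)^l * (Nat.choose k l) * g (m - l)) k]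
  have h1 : ∀ l : ℕ, m - (l + 1) = m - 1 - l := by intro l; omega
  have hext : ∑ l ∈ Finset.range k, (-1:ℝ)^(l+1) * (Nat.choose k (l+1)) * g (m - (l+1))
      = ∑ l ∈ Finset.range (k+1), (-1:ℝ)^(l+1) * (Nat.choose k (l+1)) * g (m - (l+1)) := by
    rw [Finset.sum_range_succ, Nat.choose_succ_self]
    simp
  rw [hext]
  have hmain : ∑ l ∈ Finset.range (k+1), (-1:ℝ)^(l+1) * (Nat.choose (k+1) (l+1)) * g (m - (l+1))
      = ∑ l ∈ Finset.range (k+1),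
        ((-1:ℝ)^(l+1) * (Nat.choose k (l+1)) * g (m - (l+1))
          - (-1:ℝ)^l * (Nat.choose k l) * g (m - 1 - l)) := by
    refine Finset.sum_congr rfl fun l _ => ?_
    rw [h1 l, Nat.choose_succ_succ, Nat.cast_add, pow_succ]
    ring
  rw [hmain, Finset.sum_sub_distrib]
  simp only [Nat.choose_zero_right, Nat.cast_one]
  ring

/-- Recursion for the difference operator. -/
lemma D1_succ (n k : ℕ) (hk : 1 ≤ k) (f : EuclideanSpace ℝ (Fin n))
    (j : Fin (n - (k + 1))) :
    D1 n (k + 1) f j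
      = n * (D1 n k f ⟨(j : ℕ) + 1, by have := j.isLt; omega⟩
          - D1 n k f ⟨(j : ℕ), by have := j.isLt; omega⟩) := by
  have hj := j.isLt
  set g : ℕ → ℝ := fun i => if h : i < n then f ⟨i, h⟩ else 0 with hg
  have hgf : ∀ (i : ℕ) (h : i < n), f ⟨i, h⟩ = g i := by
    intro i h; simp [hg, h]
  simp only [D1]
  have e1 : ∑ l ∈ Finset.range (k + 2),
      (-1 : ℝ) ^ l * (Nat.choose (k+1) l : ℝ) * f ⟨(j : ℕ) + (k+1) - l, by omega⟩
      = ∑ l ∈ Finset.range (k + 2),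
        (-1 : ℝ) ^ l * (Nat.choose (k+1) l : ℝ) * g ((j : ℕ) + k + 1 - l) := by
    refine Finset.sum_congr rfl fun l _ => ?_
    rw [hgf]
    congr 2 <;> omega
  have e2 : ∑ l ∈ Finset.range (k + 1),
      (-1 : ℝ) ^ l * (Nat.choose k l : ℝ) * f ⟨(j : ℕ) + 1 + k - l, by omega⟩
      = ∑ l ∈ Finset.range (k + 1),
        (-1 : ℝ) ^ l * (Nat.choose k l : ℝ) * g ((j : ℕ) + k + 1 - l) := by
    refine Finset.sum_congr rfl fun l hl => ?_
    rw [hgf]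
    simp only [Finset.mem_range] at hl
    congr 2 <;> omega
  have e3 : ∑ l ∈ Finset.range (k + 1),
      (-1 : ℝ) ^ l * (Nat.choose k l : ℝ) * f ⟨(j : ℕ) + k - l, by omega⟩
      = ∑ l ∈ Finset.range (k + 1),
        (-1 : ℝ) ^ l * (Nat.choose k l : ℝ) * g ((j : ℕ) + k + 1 - 1 - l) := by
    refine Finset.sum_congr rfl fun l hl => ?_
    rw [hgf]
    simp only [Finset.mem_range] at hl
    congr 2 <;> omega
  rw [e1, e2, e3, sum_pascal g k ((j : ℕ) + k + 1) (by omega)]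
  have hk1 : k + 1 - 1 = k := by omega
  have hkk : (n : ℝ) ^ k = (n : ℝ) ^ (k - 1) * n := by
    rw [← pow_succ, Nat.sub_add_cancel hk]
  rw [hk1, hkk]
  ring

lemma D1_phiHigh_rec (n k j : ℕ) (i : Fin (n - (k + 1))) :
    D1 n (k + 1) (WithLp.toLp 2 (phiHigh n (k + 2) j)) i
      = (1 / (n : ℝ)) * ∑ p ∈ Finset.Icc j n, D1 n (k + 1) (WithLp.toLp 2 (phiHigh n (k + 1) p)) i := by
  simp only [D1, PiLp.toLp_apply]
  have hrec : ∀ (idx : Fin n), phiHigh n (k + 2) j idx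
      = (1 / (n : ℝ)) * ∑ p ∈ Finset.Icc j n, phiHigh n (k + 1) p idx := fun _ => rfl
  simp only [hrec, Finset.mul_sum]
  rw [Finset.sum_comm]
  exact Finset.sum_congr rfl fun p _ => Finset.sum_congr rfl fun l _ => by ring

lemma D1_phiHigh (n : ℕ) (hn : 2 ≤ n) (k : ℕ) : ∀ (j : ℕ),
    D1 n (k + 1) (WithLp.toLp 2 (phiHigh n (k + 1) j))
      = WithLp.toLp 2 (fun j' : Fin (n - (k + 1)) => if (j' : ℕ) + (k + 1) + 1 = j then 1 else 0) := by
  induction k with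
  | zero =>
    intro j
    ext j'
    have hj' := j'.isLt
    simp only [D1, PiLp.toLp_apply, phiHigh, Finset.sum_range_succ, Finset.sum_range_zero]
    norm_num
    split_ifs <;> first | (exfalso; omega) | norm_num
  | succ k ih =>
    intro j
    have hcalc : ∀ (i' : Fin (n - (k + 1))), D1 n (k + 1) (WithLp.toLp 2 (phiHigh n (k + 2) j)) i'
        = (1 / (n : ℝ)) * (if j ≤ (i' : ℕ) + (k + 1) + 1 ∧ (i' : ℕ) + (k + 1) + 1 ≤ n
            then 1 else 0) := by
      intro i'
      rw [D1_phiHigh_rec]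
      congr 1
      simp only [ih, PiLp.toLp_apply]
      rw [Finset.sum_ite_eq (Finset.Icc j n) ((i' : ℕ) + (k + 1) + 1) (fun _ => (1 : ℝ))]
      simp [Finset.mem_Icc]
    ext i
    have hi := i.isLt
    rw [D1_succ n (k + 1) (by omega) _ i, hcalc, hcalc]
    have hn0 : (n : ℝ) ≠ 0 := Nat.cast_ne_zero.mpr (by omega)
    simp only [Fin.val_mk, PiLp.toLp_apply]
    split_ifs <;> first | (exfalso; omega) | (norm_num; try rw [mul_inv_cancel₀ hn0])

lemma D1_phiHigh_self (n : ℕ) (hn : 2 ≤ n) (l k : ℕ) (hl : 1 ≤ l) (hlk : l ≤ k) :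
    ∀ i : Fin (n - k), D1 n k (WithLp.toLp 2 (phiHigh n l l)) i = 0 := by
  obtain ⟨d, rfl⟩ : ∃ d, k = l + d := ⟨k - l, by omega⟩
  clear hlk
  induction d with
  | zero =>
    intro i
    obtain ⟨l', rfl⟩ : ∃ l', l = l' + 1 := ⟨l - 1, by omega⟩
    have h := congrArg (fun v : EuclideanSpace ℝ (Fin (n - (l' + 1))) => v i) (D1_phiHigh n hn l' (l' + 1))
    simp only [PiLp.toLp_apply] at h
    refine h.trans ?_
    rw [if_neg (by omega)]
  | succ d ih =>
    intro i
    have h := D1_succ n (l + d) (by omega) (WithLp.toLp 2 (phiHigh n l l)) i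
    refine h.trans ?_
    rw [ih, ih]
    ring

lemma D1_add (n k : ℕ) (f g : EuclideanSpace ℝ (Fin n)) (i : Fin (n - k)) :
    D1 n k (f + g) i = D1 n k f i + D1 n k g i := by
  simp only [D1, PiLp.toLp_apply, PiLp.add_apply, mul_add, Finset.mul_sum, Finset.sum_add_distrib]

lemma D1_smul (n k : ℕ) (c : ℝ) (f : EuclideanSpace ℝ (Fin n)) (i : Fin (n - k)) :
    D1 n k (c • f) i = c * D1 n k f i := by
  simp only [D1, PiLp.toLp_apply, PiLp.smul_apply, smul_eq_mul, Finset.mul_sum]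
  exact Finset.sum_congr rfl fun l _ => by ring

lemma D1_zero (n k : ℕ) (i : Fin (n - k)) :
    D1 n k (0 : EuclideanSpace ℝ (Fin n)) i = 0 := by
  simp [D1]

lemma D1_sub (n k : ℕ) (f g : EuclideanSpace ℝ (Fin n)) (i : Fin (n - k)) :
    D1 n k (f - g) i = D1 n k f i - D1 n k g i := by
  simp only [D1, PiLp.toLp_apply, PiLp.sub_apply, mul_sub, Finset.mul_sum, Finset.sum_sub_distrib]

lemma D1_Vspan (n k m : ℕ) (hn : 2 ≤ n) (hm : m ≤ k) (v : EuclideanSpace ℝ (Fin n))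
    (hv : v ∈ Vspan n m) (i : Fin (n - k)) : D1 n k v i = 0 := by
  induction hv using Submodule.span_induction with
  | mem x hx =>
    obtain ⟨l, hl, rfl⟩ := hx
    simp only [Finset.mem_Icc] at hl
    rw [phi, if_neg (by omega)]
    exact D1_phiHigh_self n hn l k hl.1 (le_trans hl.2 hm) i
  | zero => exact D1_zero n k i
  | add x y hx hy ihx ihy => rw [D1_add, ihx, ihy, add_zero]
  | smul c x hx ihx => rw [D1_smul, ihx, mul_zero]

lemma D1_AW (n k m : ℕ) (hn : 2 ≤ n) (hm : m ≤ k) (v : EuclideanSpace ℝ (Fin n))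
    (i : Fin (n - k)) : D1 n k (AW (Vspan n m) v) i = D1 n k v i := by
  have hv : AW (Vspan n m) v
      = v - ((Submodule.orthogonalProjection (Vspan n m) v : EuclideanSpace ℝ (Fin n))) := by
    rw [AW, eq_sub_iff_add_eq, add_comm]
    exact Submodule.starProjection_add_starProjection_orthogonal (K := Vspan n m) v
  rw [hv, D1_sub, D1_Vspan n k m hn hm _ (Submodule.coe_mem _) i, sub_zero]

/-- **Relation between dictionary and difference operator.**  Fix `n ≥ 2` and
`k ∈ {1, …, n−1}`.  Then `D^k φ^k_j = D^k φ̃^k_j = 0` for every `j ∈ {1, …, k}`, and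
`D^k φ^k_j = D^k φ̃^k_j = 1_{{j}}` for every `j ∈ {k+1, …, n}` (the vector in `ℝ^{n−k}`,
indexed by `{k+1,…,n}`, equal to `1` at position `j` and `0` elsewhere). -/
theorem dictionary_difference_relation (n k : ℕ) (hn : 2 ≤ n) (hk : 1 ≤ k) (hk' : k ≤ n - 1) :
    (∀ j, 1 ≤ j → j ≤ k →
      D1 n k (phi n k j) = 0 ∧ D1 n k (phiTil n k j) = 0) ∧
    (∀ j, k + 1 ≤ j → j ≤ n →
      D1 n k (phi n k j) = WithLp.toLp 2 (fun j' : Fin (n - k) => if (j' : ℕ) + k + 1 = j then 1 else 0) ∧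
      D1 n k (phiTil n k j) = WithLp.toLp 2 (fun j' : Fin (n - k) => if (j' : ℕ) + k + 1 = j then 1 else 0)) := by
  obtain ⟨k', rfl⟩ : ∃ k', k = k' + 1 := ⟨k - 1, by omega⟩
  constructor
  · intro j hj1 hjk
    constructor
    · ext i
      rw [phi]
      split_ifs with h
      · exact D1_phiHigh_self n hn j (k' + 1) hj1 hjk i
      · have h2 := congrArg (fun v : EuclideanSpace ℝ (Fin (n - (k' + 1))) => v i) (D1_phiHigh n hn k' j)
        simp only [PiLp.toLp_apply] at h2
        refine h2.trans ?_
        rw [if_neg (by omega)]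
        rfl
    · ext i
      rw [phiTil, if_pos hjk]
      rw [D1_smul, D1_AW n (k' + 1) (j - 1) hn (by omega)]
      rw [phi, if_neg (by omega)]
      rw [D1_phiHigh_self n hn j (k' + 1) hj1 hjk i, mul_zero]
      rfl
  · intro j hj1 hjn
    have hphi : D1 n (k' + 1) (phi n (k' + 1) j)
        = WithLp.toLp 2 (fun j' : Fin (n - (k' + 1)) => if (j' : ℕ) + (k' + 1) + 1 = j then 1 else 0) := by
      rw [phi, if_neg (by omega)]
      exact D1_phiHigh n hn k' j
    refine ⟨hphi, ?_⟩
    ext i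
    rw [phiTil, if_neg (by omega)]
    rw [D1_AW n (k' + 1) (k' + 1) hn le_rfl, hphi]

end VitaliTV
end
end

section
/- Valid noise weights. Fix k ≥ 1, an active set S with hyperrectangular tessellation {R_m}_{m=1}^s, and a constant C ≥ 1. Define v²_{i,m}(j_i) := ((t_{i,m}−j_i)/d^−_{i,m})^{2k−1} for j_i ∈ R^−_{i,m}, 0 for j_i ∈ R⁰_{i,m}, and ((j_i−t_{i,m}−k+1)/d^+_{i,m})^{2k−1} for j_i ∈ R^+_{i,m}; set v_{j₁,…,j_d} := (1/(dC)) ∑_{i=1}^d v_{i,m}(j_i) for (j₁,…,j_d) ∈ R_m, and γ̃ := C d √(∑_{i=1}^d (d_{i,max}(S)/n_i)^{2k−1}). Then for all m ∈ {1,…,s} and all (j₁,…,j_d) ∈ R_m: √(∑_{i=1}^d ṽ²_{i,m}(j_i)) ≤ v_{j₁,…,j_d} · γ̃, where ṽ²_{i,m}(j_i) := ((t_{i,m}−j_i)/n_i)^{2k−1} on R^−_{i,m}, 0 on R⁰_{i,m}, and ((j_i−t_{i,m}−k+1)/n_i)^{2k−1} on R^+_{i,m}. In particular v has entries in [0,1]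 and defines valid noise weights. -/
open Finset

noncomputable section

namespace VitaliTV

variable {ι : Type*} [Fintype ι] [DecidableEq ι] {s : ℕ}

abbrev DIdx (nn : ι → ℕ) (k : ℕ) := ∀ i, Fin (nn i - k)

/-- 1-based coordinates of the `m`-th jump location. -/
def jump1 (nn : ι → ℕ) (k : ℕ) (t : Fin s → DIdx nn k) (m : Fin s) (i : ι) : ℕ :=
  (t m i : ℕ) + k + 1

/-- Hyperrectangular tessellation of `∏ i, {k+1, …, nn i}` for the jump locations `t`. -/
def IsTessellation (nn : ι → ℕ) (k : ℕ) (t : Fin s → DIdx nn k)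
    (tm tp : Fin s → ι → ℕ) : Prop :=
  (∀ m i, k + 1 ≤ tm m i ∧ tp m i ≤ nn i) ∧
  (∀ j : ι → ℕ, (∀ i, k + 1 ≤ j i ∧ j i ≤ nn i) →
    ∃ m, ∀ i, tm m i ≤ j i ∧ j i ≤ tp m i) ∧
  (∀ m m', m ≠ m' →
    ¬ ∃ j : ι → ℕ, ∀ i, (tm m i < j i ∧ j i < tp m i) ∧ (tm m' i < j i ∧ j i < tp m' i)) ∧
  (∀ m i, tm m i < jump1 nn k t m i ∧ jump1 nn k t m i + k - 1 < tp m i)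

/-- `d^−_{i,m} := t_{i,m} − t^−_{i,m}`. -/
def dminus (nn : ι → ℕ) (k : ℕ) (t : Fin s → DIdx nn k) (tm : Fin s → ι → ℕ)
    (m : Fin s) (i : ι) : ℕ :=
  jump1 nn k t m i - tm m i

/-- `d^+_{i,m} := t^+_{i,m} − t_{i,m} − k + 1`. -/
def dplus (nn : ι → ℕ) (k : ℕ) (t : Fin s → DIdx nn k) (tp : Fin s → ι → ℕ)
    (m : Fin s) (i : ι) : ℕ :=
  tp m i + 1 - (jump1 nn k t m i + k)

/-- `d_{i,max}(S) := max_m max{d^−_{i,m}, d^+_{i,m}}`. -/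
def dimax (nn : ι → ℕ) (k : ℕ) (t : Fin s → DIdx nn k) (tm tp : Fin s → ι → ℕ)
    (i : ι) : ℕ :=
  Finset.univ.sup fun m => max (dminus nn k t tm m i) (dplus nn k t tp m i)

/-- The coordinatewise squared antiprojection bounds `ṽ²_{i,m}(j_i)` (normalized by `n_i`). -/
def vtSq (nn : ι → ℕ) (k : ℕ) (t : Fin s → DIdx nn k) (m : Fin s) (i : ι) (ji : ℕ) : ℝ :=
  if ji ≤ jump1 nn k t m i then
    (((jump1 nn k t m i - ji : ℕ) : ℝ) / (nn i : ℝ)) ^ (2 * k - 1)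
  else if ji ≤ jump1 nn k t m i + k - 1 then 0
  else (((ji - (jump1 nn k t m i + k - 1) : ℕ) : ℝ) / (nn i : ℝ)) ^ (2 * k - 1)

/-- The coordinatewise squared noise weights `v²_{i,m}(j_i)` (normalized by `d^±_{i,m}`). -/
def vSq (nn : ι → ℕ) (k : ℕ) (t : Fin s → DIdx nn k) (tm tp : Fin s → ι → ℕ)
    (m : Fin s) (i : ι) (ji : ℕ) : ℝ :=
  if ji ≤ jump1 nn k t m i then
    (((jump1 nn k t m i - ji : ℕ) : ℝ) / (dminus nn k t tm m i : ℝ)) ^ (2 * k - 1)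
  else if ji ≤ jump1 nn k t m i + k - 1 then 0
  else (((ji - (jump1 nn k t m i + k - 1) : ℕ) : ℝ) / (dplus nn k t tp m i : ℝ)) ^ (2 * k - 1)

lemma sqrt_two_add_le (a b : ℝ) (ha : 0 ≤ a) (hb : 0 ≤ b) :
    Real.sqrt (a + b) ≤ Real.sqrt a + Real.sqrt b := by
  have h1 := Real.sq_sqrt ha
  have h2 := Real.sq_sqrt hb
  have h3 := Real.sqrt_nonneg a
  have h4 := Real.sqrt_nonneg b
  have : a + b ≤ (Real.sqrt a + Real.sqrt b) ^ 2 := by nlinarith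
  calc Real.sqrt (a + b) ≤ Real.sqrt ((Real.sqrt a + Real.sqrt b) ^ 2) :=
        Real.sqrt_le_sqrt this
    _ = Real.sqrt a + Real.sqrt b := Real.sqrt_sq (by positivity)

lemma sqrt_sum_le_sum_sqrt {α : Type*} (S : Finset α) (f : α → ℝ)
    (hf : ∀ i ∈ S, 0 ≤ f i) :
    Real.sqrt (∑ i ∈ S, f i) ≤ ∑ i ∈ S, Real.sqrt (f i) := by
  induction S using Finset.cons_induction with
  | empty => simp
  | cons a S ha ih =>
    simp only [Finset.sum_cons]
    have h1 : 0 ≤ f a := hf a (Finset.mem_cons_self a S)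
    have h2 : ∀ i ∈ S, 0 ≤ f i := fun i hi => hf i (Finset.mem_cons_of_mem hi)
    calc Real.sqrt (f a + ∑ i ∈ S, f i)
        ≤ Real.sqrt (f a) + Real.sqrt (∑ i ∈ S, f i) :=
          sqrt_two_add_le _ _ h1 (Finset.sum_nonneg h2)
      _ ≤ Real.sqrt (f a) + ∑ i ∈ S, Real.sqrt (f i) := by linarith [ih h2]

/-- **Valid noise weights.**  Fix `k ≥ 1`, an active set `S` with hyperrectangular
tessellation `{R_m}` and a constant `C ≥ 1`.  With
`v_{j₁,…,j_d} := (1/(dC)) ∑_i v_{i,m}(j_i)` on `R_m` and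
`γ̃ := C d √(∑_i (d_{i,max}(S)/n_i)^{2k−1})`, for all `m` and all `(j₁,…,j_d) ∈ R_m`:
`√(∑_i ṽ²_{i,m}(j_i)) ≤ v_{j₁,…,j_d} γ̃`; in particular `v` has entries in `[0,1]`. -/
theorem valid_noise_weights
    (d : ℕ) (hd : 1 ≤ d) (nn : Fin d → ℕ) (k : ℕ) (hk : 1 ≤ k) (hk' : ∀ i, k ≤ nn i - 1)
    (s : ℕ) (t : Fin s → DIdx nn k) (ht : Function.Injective t)
    (tm tp : Fin s → Fin d → ℕ) (htess : IsTessellation nn k t tm tp)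
    (C : ℝ) (hC : 1 ≤ C) :
    ∀ m : Fin s, ∀ j : Fin d → ℕ, (∀ i, tm m i ≤ j i ∧ j i ≤ tp m i) →
      (Real.sqrt (∑ i, vtSq nn k t m i (j i)) ≤
        ((1 / ((d : ℝ) * C)) * ∑ i, Real.sqrt (vSq nn k t tm tp m i (j i)))
          * (C * (d : ℝ)
              * Real.sqrt (∑ i, ((dimax nn k t tm tp i : ℝ) / (nn i : ℝ)) ^ (2 * k - 1)))) ∧
      0 ≤ (1 / ((d : ℝ) * C)) * ∑ i, Real.sqrt (vSq nn k t tm tp m i (j i)) ∧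
      (1 / ((d : ℝ) * C)) * ∑ i, Real.sqrt (vSq nn k t tm tp m i (j i)) ≤ 1 := by
  obtain ⟨hrange, hcover, hdisj, hint⟩ := htess
  intro m j hj
  have hC0 : (0:ℝ) < C := lt_of_lt_of_le one_pos hC
  have hd0 : (0:ℝ) < d := by exact_mod_cast hd
  have hn : ∀ i, (0:ℝ) < nn i := by
    intro i
    have h1 := hk' i
    have : 0 < nn i := by omega
    exact_mod_cast this
  have hdm1 : ∀ i, 1 ≤ dminus nn k t tm m i := by
    intro i
    have := (hint m i).1
    unfold dminus
    omega
  have hdp1 : ∀ i, 1 ≤ dplus nn k t tp m i := by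
    intro i
    have := (hint m i).2
    unfold dplus jump1
    unfold jump1 at this
    omega
  have hdmax : ∀ i, (dminus nn k t tm m i : ℝ) ≤ dimax nn k t tm tp i ∧
      (dplus nn k t tp m i : ℝ) ≤ dimax nn k t tm tp i := by
    intro i
    constructor <;> exact_mod_cast
      le_trans (by simp) (Finset.le_sup (f := fun m' => max (dminus nn k t tm m' i)
        (dplus nn k t tp m' i)) (Finset.mem_univ m))
  -- nonnegativity of vSq
  have h0 : ∀ i, 0 ≤ vSq nn k t tm tp m i (j i) := by
    intro i
    unfold vSq
    split_ifs <;> positivity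
  -- vSq ≤ 1
  have h1 : ∀ i, vSq nn k t tm tp m i (j i) ≤ 1 := by
    intro i
    unfold vSq
    have hdm := hdm1 i
    have hdp := hdp1 i
    split_ifs with hA hB
    · apply pow_le_one₀ (by positivity)
      rw [div_le_one (by exact_mod_cast hdm)]
      have : jump1 nn k t m i - j i ≤ dminus nn k t tm m i := by
        have := (hj i).1
        unfold dminus
        omega
      exact_mod_cast this
    · exact zero_le_one
    · apply pow_le_one₀ (by positivity)
      rw [div_le_one (by exact_mod_cast hdp)]
      have : j i - (jump1 nn k t m i + k - 1) ≤ dplus nn k t tp m i := by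
        have h2 := (hj i).2
        have h3 := (hint m i).2
        unfold dplus
        omega
      exact_mod_cast this
  -- vtSq ≤ vSq * (dimax/n)^(2k-1)
  have h2 : ∀ i, vtSq nn k t m i (j i) ≤
      vSq nn k t tm tp m i (j i) * ((dimax nn k t tm tp i : ℝ) / (nn i : ℝ)) ^ (2 * k - 1) := by
    intro i
    unfold vtSq vSq
    have hni := hn i
    split_ifs with hA hB
    · rw [← mul_pow]
      apply pow_le_pow_left₀ (by positivity)
      have hdm : (0:ℝ) < dminus nn k t tm m i := by exact_mod_cast hdm1 i
      have key : ((jump1 nn k t m i - j i : ℕ) : ℝ) / (nn i : ℝ) =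
          ((jump1 nn k t m i - j i : ℕ) : ℝ) / (dminus nn k t tm m i : ℝ)
            * ((dminus nn k t tm m i : ℝ) / (nn i : ℝ)) := by
        field_simp
      rw [key]
      gcongr
      exact_mod_cast (hdmax i).1
    · simp
    · rw [← mul_pow]
      apply pow_le_pow_left₀ (by positivity)
      have hdp : (0:ℝ) < dplus nn k t tp m i := by exact_mod_cast hdp1 i
      have key : ((j i - (jump1 nn k t m i + k - 1) : ℕ) : ℝ) / (nn i : ℝ) =
          ((j i - (jump1 nn k t m i + k - 1) : ℕ) : ℝ) / (dplus nn k t tp m i : ℝ)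
            * ((dplus nn k t tp m i : ℝ) / (nn i : ℝ)) := by
        field_simp
      rw [key]
      gcongr
      exact_mod_cast (hdmax i).2
  have hSig : ∀ i, ((dimax nn k t tm tp i : ℝ) / (nn i : ℝ)) ^ (2 * k - 1) ≤
      ∑ i', ((dimax nn k t tm tp i' : ℝ) / (nn i' : ℝ)) ^ (2 * k - 1) := by
    intro i
    exact Finset.single_le_sum (f := fun i' =>
      ((dimax nn k t tm tp i' : ℝ) / (nn i' : ℝ)) ^ (2 * k - 1))
      (fun i' _ => by positivity) (Finset.mem_univ i)
  set Sd := ∑ i', ((dimax nn k t tm tp i' : ℝ) / (nn i' : ℝ)) ^ (2 * k - 1) with hSd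
  have hSd0 : 0 ≤ Sd := Finset.sum_nonneg fun i' _ => by positivity
  have hvt0 : ∀ i, 0 ≤ vtSq nn k t m i (j i) := by
    intro i
    unfold vtSq
    split_ifs <;> positivity
  refine ⟨?_, ?_, ?_⟩
  · -- main inequality
    have step1 : Real.sqrt (∑ i, vtSq nn k t m i (j i)) ≤
        ∑ i, Real.sqrt (vtSq nn k t m i (j i)) :=
      sqrt_sum_le_sum_sqrt _ _ fun i _ => hvt0 i
    have step2 : ∀ i, Real.sqrt (vtSq nn k t m i (j i)) ≤
        Real.sqrt (vSq nn k t tm tp m i (j i)) * Real.sqrt Sd := by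
      intro i
      rw [← Real.sqrt_mul (h0 i)]
      apply Real.sqrt_le_sqrt
      calc vtSq nn k t m i (j i) ≤ vSq nn k t tm tp m i (j i) *
            ((dimax nn k t tm tp i : ℝ) / (nn i : ℝ)) ^ (2 * k - 1) := h2 i
        _ ≤ vSq nn k t tm tp m i (j i) * Sd := by
            apply mul_le_mul_of_nonneg_left (hSig i) (h0 i)
    have step3 : ∑ i, Real.sqrt (vtSq nn k t m i (j i)) ≤
        (∑ i, Real.sqrt (vSq nn k t tm tp m i (j i))) * Real.sqrt Sd := by
      rw [Finset.sum_mul]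
      exact Finset.sum_le_sum fun i _ => step2 i
    have heq : ((1 / ((d : ℝ) * C)) * ∑ i, Real.sqrt (vSq nn k t tm tp m i (j i)))
          * (C * (d : ℝ) * Real.sqrt Sd) =
        (∑ i, Real.sqrt (vSq nn k t tm tp m i (j i))) * Real.sqrt Sd := by
      field_simp
    rw [heq]
    exact le_trans step1 step3
  · -- nonnegativity
    apply mul_nonneg (by positivity)
    exact Finset.sum_nonneg fun i _ => Real.sqrt_nonneg _
  · -- ≤ 1
    have hsum : ∑ i, Real.sqrt (vSq nn k t tm tp m i (j i)) ≤ (d : ℝ) := by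
      calc ∑ i, Real.sqrt (vSq nn k t tm tp m i (j i)) ≤ ∑ _i : Fin d, (1:ℝ) :=
            Finset.sum_le_sum fun i _ => by
              rw [show (1:ℝ) = Real.sqrt 1 by simp]
              exact Real.sqrt_le_sqrt (h1 i)
        _ = (d : ℝ) := by simp
    calc (1 / ((d : ℝ) * C)) * ∑ i, Real.sqrt (vSq nn k t tm tp m i (j i))
        ≤ (1 / ((d : ℝ) * C)) * (d : ℝ) := by
          apply mul_le_mul_of_nonneg_left hsum (by positivity)
      _ = 1 / C := by field_simp
      _ ≤ 1 := by rw [div_le_one hC0]; exact hC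

end VitaliTV
end
end

section
/- Discrete differences of some polynomials. For every integer k ≥ 1 there is a constant C_k depending only on k such that for every integer d ≥ 2k the following hold. (i) With q_j := (j/d)^{(2k−1)/2} for j = 0,…,d and (Δ^k q)_j := ∑_{l=0}^{k} (−1)^l binom(k,l) q_{j−l} for j = k,…,d, one has ∑_{j=k}^{d} (Δ^k q)_j² ≤ C_k · log(e·d)/d^{2k−1}. (ii) With p_j := (j/d)^k for j = 0,…,d, one has ∑_{j=k}^{d} (Δ^k p)_j² ≤ C_k/d^{2k−1}. -/
open Finset

private lemma sum_shift_pascal (k : ℕ) (f : ℝ → ℝ) (x : ℝ) :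
    ∑ l ∈ Finset.range (k + 2), (-1:ℝ)^l * ((k+1).choose l : ℝ) * f (x - l)
      = (∑ l ∈ Finset.range (k + 1), (-1:ℝ)^l * (k.choose l : ℝ) * f (x - l))
        - ∑ l ∈ Finset.range (k + 1), (-1:ℝ)^l * (k.choose l : ℝ) * f ((x - 1) - l) := by
  rw [Finset.sum_range_succ' (fun l => (-1:ℝ)^l * ((k+1).choose l : ℝ) * f (x - l)) (k+1)]
  rw [Finset.sum_range_succ' (fun l => (-1:ℝ)^l * (k.choose l : ℝ) * f (x - l)) k]
  have hsplit : ∀ l ∈ Finset.range (k+1),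
      (-1:ℝ)^(l+1) * (((k+1).choose (l+1) : ℕ) : ℝ) * f (x - ↑(l+1))
        = (-1:ℝ)^(l+1) * ((k.choose (l+1) : ℕ) : ℝ) * f (x - ↑(l+1))
          + (-((-1:ℝ)^l * ((k.choose l : ℕ) : ℝ) * f ((x - 1) - l))) := by
    intro l _
    have hx : x - (↑(l+1) : ℝ) = (x - 1) - l := by push_cast; ring
    rw [Nat.choose_succ_succ, hx]
    push_cast
    ring
  rw [Finset.sum_congr rfl hsplit, Finset.sum_add_distrib, Finset.sum_neg_distrib]
  rw [Finset.sum_range_succ (fun l => (-1:ℝ)^(l+1) * ((k.choose (l+1) : ℕ) : ℝ) * f (x - ↑(l+1))) k]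
  simp [Nat.choose_succ_self]
  ring

private lemma key_diff_bound (k : ℕ) : ∀ p : ℝ, p ≤ k → ∀ x : ℝ, (k : ℝ) < x →
    |∑ l ∈ Finset.range (k+1), (-1:ℝ)^l * (k.choose l : ℝ) * (x - l) ^ p|
      ≤ (∏ i ∈ Finset.range k, |p - i|) * (x - k) ^ (p - k) := by
  induction k with
  | zero =>
    intro p _ x hx
    have hx0 : (0:ℝ) < x := by exact_mod_cast hx
    simp only [zero_add, Finset.sum_range_one, Finset.prod_range_zero, Nat.cast_zero, sub_zero,
      Nat.choose_self, Nat.cast_one, one_mul, pow_zero]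
    rw [abs_of_nonneg (Real.rpow_nonneg hx0.le p)]
  | succ k ih =>
    intro p hp x hx
    have hx' : (k:ℝ) + 1 < x := by push_cast at hx; linarith
    have hx1 : (k:ℝ) < x - 1 := by linarith
    set D : ℝ → ℝ := fun y => ∑ l ∈ Finset.range (k+1), (-1:ℝ)^l * (k.choose l : ℝ) * (y - l) ^ p
      with hDdef
    set D' : ℝ → ℝ :=
      fun y => ∑ l ∈ Finset.range (k+1), (-1:ℝ)^l * (k.choose l : ℝ) * (p * (y - l) ^ (p-1))
      with hD'def
    have hderiv : ∀ y : ℝ, (k:ℝ) < y → HasDerivAt D (D' y) y := by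
      intro y hy
      apply HasDerivAt.fun_sum
      intro l hl
      have hl' : (l:ℝ) ≤ (k:ℝ) := by
        exact_mod_cast Nat.lt_succ_iff.mp (Finset.mem_range.mp hl)
      have hyl : (0:ℝ) < y - l := by linarith
      have h1 := ((hasDerivAt_id y).sub_const (l:ℝ)).rpow_const (p := p) (Or.inl hyl.ne')
      have h2 := h1.const_mul ((-1:ℝ)^l * (k.choose l : ℝ))
      simp only [id_eq] at h2
      convert h2 using 1
      rfl
      ring
    have hmvt := exists_hasDerivAt_eq_slope D D' (by linarith : x - 1 < x)
      (fun y hy => (hderiv y (lt_of_lt_of_le hx1 hy.1)).continuousAt.continuousWithinAt)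
      (fun y hy => hderiv y (lt_trans hx1 hy.1))
    obtain ⟨c, hcmem, hceq⟩ := hmvt
    have hck : (k:ℝ) < c := lt_trans hx1 hcmem.1
    have hDsub : D x - D (x-1) = D' c := by
      rw [hceq]; field_simp; ring
    have hpascal : ∑ l ∈ Finset.range (k+1+1), (-1:ℝ)^l * ((k+1).choose l : ℝ) * (x - l) ^ p
        = D x - D (x - 1) := sum_shift_pascal k (fun t => t ^ p) x
    rw [hpascal, hDsub]
    have hfact : D' c = p * ∑ l ∈ Finset.range (k+1), (-1:ℝ)^l * (k.choose l : ℝ) * (c - l)^(p-1) := by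
      rw [hD'def, Finset.mul_sum]
      exact Finset.sum_congr rfl (fun l _ => by ring)
    rw [hfact, abs_mul]
    have hih := ih (p - 1) (by push_cast at hp; linarith) c hck
    have hbase : (c - k) ^ (p - 1 - k) ≤ (x - (k+1)) ^ (p - 1 - k) := by
      apply Real.rpow_le_rpow_of_nonpos (by linarith : (0:ℝ) < x - ((k:ℝ)+1))
        (by linarith [hcmem.1] : x - ((k:ℝ)+1) ≤ c - k)
      push_cast at hp; linarith
    have hP : (0:ℝ) ≤ ∏ i ∈ Finset.range k, |p - 1 - i| :=
      Finset.prod_nonneg fun i _ => abs_nonneg _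
    have hstep : |p| * |∑ l ∈ Finset.range (k+1), (-1:ℝ)^l * (k.choose l : ℝ) * (c - l)^(p-1)|
        ≤ |p| * ((∏ i ∈ Finset.range k, |p - 1 - i|) * (x - (k+1)) ^ (p - 1 - k)) := by
      apply mul_le_mul_of_nonneg_left _ (abs_nonneg p)
      calc |∑ l ∈ Finset.range (k+1), (-1:ℝ)^l * (k.choose l : ℝ) * (c - l)^(p-1)|
          ≤ (∏ i ∈ Finset.range k, |p - 1 - i|) * (c - k) ^ (p - 1 - k) := hih
        _ ≤ (∏ i ∈ Finset.range k, |p - 1 - i|) * (x - (k+1)) ^ (p - 1 - k) :=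
            mul_le_mul_of_nonneg_left hbase hP
    refine hstep.trans (le_of_eq ?_)
    rw [Finset.prod_range_succ' (fun i => |p - (i:ℝ)|) k]
    have hprod : (∏ i ∈ Finset.range k, |p - ((i+1 : ℕ):ℝ)|)
        = ∏ i ∈ Finset.range k, |p - 1 - (i:ℝ)| :=
      Finset.prod_congr rfl (fun i _ => by congr 1; push_cast; ring)
    have hc1 : ((k+1:ℕ):ℝ) = (k:ℝ)+1 := by push_cast; ring
    have he2 : p - 1 - (k:ℝ) = p - ((k:ℝ)+1) := by ring
    rw [hprod, hc1, he2, Nat.cast_zero, sub_zero]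
    ring




/-- **Discrete differences of some polynomials.**  For every `k ≥ 1` there is a constant `C_k`
depending only on `k` such that for every integer `d ≥ 2k` the following hold for the
(unnormalized) `k`-th order differences `(Δ^k a)_j := ∑_{l=0}^{k} (−1)^l binom(k,l) a_{j−l}`,
`j = k, …, d`:
(i) with `q_j := (j/d)^{(2k−1)/2}`, one has `∑_{j=k}^{d} (Δ^k q)_j² ≤ C_k log(e d)/d^{2k−1}`;
(ii) with `p_j := (j/d)^k`, one has `∑_{j=k}^{d} (Δ^k p)_j² ≤ C_k/d^{2k−1}`. -/
theorem discrete_differences_of_polynomials (k : ℕ) (hk : 1 ≤ k) :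
    ∃ C : ℝ, 0 < C ∧ ∀ d : ℕ, 2 * k ≤ d →
      (∑ j ∈ Finset.Icc k d,
          (∑ l ∈ Finset.range (k + 1),
              (-1 : ℝ) ^ l * (Nat.choose k l : ℝ) *
                (((j - l : ℕ) : ℝ) / (d : ℝ)) ^ ((2 * (k : ℝ) - 1) / 2)) ^ 2
        ≤ C * Real.log (Real.exp 1 * d) / (d : ℝ) ^ (2 * k - 1)) ∧
      (∑ j ∈ Finset.Icc k d,
          (∑ l ∈ Finset.range (k + 1),
              (-1 : ℝ) ^ l * (Nat.choose k l : ℝ) *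
                (((j - l : ℕ) : ℝ) / (d : ℝ)) ^ k) ^ 2
        ≤ C / (d : ℝ) ^ (2 * k - 1)) := by
  classical
  set A : ℝ := ∏ i ∈ Finset.range k, |(2*(k:ℝ)-1)/2 - i| with hA
  set B : ℝ := ∏ i ∈ Finset.range k, |(k:ℝ) - i| with hB
  set K0 : ℝ := 4^k * (2*(k:ℝ))^(2*k) with hK0
  have hA0 : 0 ≤ A := Finset.prod_nonneg fun i _ => abs_nonneg _
  have hB0 : 0 ≤ B := Finset.prod_nonneg fun i _ => abs_nonneg _
  have hkR : (1:ℝ) ≤ (k:ℝ) := by exact_mod_cast hk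
  have hK00 : 0 ≤ K0 := by positivity
  refine ⟨K0 + A^2 + B^2 + 1, by positivity, fun d hd => ?_⟩
  have hd2 : 2 ≤ d := by omega
  have hkd : k + 1 ≤ d := by omega
  have hd0 : (0:ℝ) < d := by exact_mod_cast (by omega : 0 < d)
  have hd1 : (1:ℝ) ≤ d := by exact_mod_cast (by omega : 1 ≤ d)
  set Dd : ℝ := (d:ℝ)^(2*k-1) with hDd
  have hD0 : 0 < Dd := pow_pos hd0 _
  have hlog0 : 0 ≤ Real.log d := Real.log_nonneg hd1
  have hlogE : Real.log (Real.exp 1 * d) = 1 + Real.log d := by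
    rw [Real.log_mul (Real.exp_ne_zero 1) (ne_of_gt hd0), Real.log_exp]
  have hL : 1 ≤ 1 + Real.log d := by linarith
  have hc2k : ((2*k-1:ℕ):ℝ) = 2*(k:ℝ) - 1 := by
    rw [Nat.cast_sub (by omega)]; push_cast; ring
  -- generic bound for j ≥ k+1
  have hinner : ∀ p : ℝ, p ≤ (k:ℝ) → ∀ j ∈ Finset.Icc (k+1) d,
      (∑ l ∈ Finset.range (k+1), (-1:ℝ)^l * (k.choose l : ℝ) * (((j-l:ℕ):ℝ)/(d:ℝ))^p)^2
        ≤ ((∏ i ∈ Finset.range k, |p - i|)^2 * (((j:ℝ) - k)^(p - (k:ℝ)))^2) / ((d:ℝ)^p)^2 := by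
    intro p hpk j hj
    obtain ⟨hj1, hj2⟩ := Finset.mem_Icc.mp hj
    have hjk : (k:ℝ) < j := by exact_mod_cast (by omega : k < j)
    have heq : ∑ l ∈ Finset.range (k+1), (-1:ℝ)^l * (k.choose l : ℝ) * (((j-l:ℕ):ℝ)/(d:ℝ))^p
        = (∑ l ∈ Finset.range (k+1), (-1:ℝ)^l * (k.choose l : ℝ) * ((j:ℝ) - l)^p) / (d:ℝ)^p := by
      rw [Finset.sum_div]
      refine Finset.sum_congr rfl fun l hl => ?_
      have hlj : l ≤ j := by have := Finset.mem_range.mp hl; omega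
      have hlj' : (l:ℝ) ≤ (j:ℝ) := by exact_mod_cast hlj
      rw [Nat.cast_sub hlj, Real.div_rpow (by linarith) hd0.le]
      ring
    rw [heq, div_pow]
    have hkey := key_diff_bound k p hpk (j:ℝ) hjk
    have hsq : (∑ l ∈ Finset.range (k+1), (-1:ℝ)^l * (k.choose l : ℝ) * ((j:ℝ) - l)^p)^2
        ≤ ((∏ i ∈ Finset.range k, |p - i|) * (((j:ℝ) - k)^(p - (k:ℝ))))^2 := by
      rw [← sq_abs]
      exact pow_le_pow_left₀ (abs_nonneg _) hkey 2
    rw [mul_pow] at hsq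
    exact (div_le_div_iff_of_pos_right (by positivity)).mpr hsq
  -- bound for the term j = k
  have hj0 : ∀ p : ℝ, 0 ≤ p →
      |∑ l ∈ Finset.range (k+1), (-1:ℝ)^l * (k.choose l : ℝ) * (((k-l:ℕ):ℝ)/(d:ℝ))^p|
        ≤ 2^k * ((k:ℝ)/d)^p := by
    intro p hp
    calc |∑ l ∈ Finset.range (k+1), (-1:ℝ)^l * (k.choose l : ℝ) * (((k-l:ℕ):ℝ)/(d:ℝ))^p|
        ≤ ∑ l ∈ Finset.range (k+1), |(-1:ℝ)^l * (k.choose l : ℝ) * (((k-l:ℕ):ℝ)/(d:ℝ))^p| :=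
          Finset.abs_sum_le_sum_abs _ _
      _ ≤ ∑ l ∈ Finset.range (k+1), (k.choose l : ℝ) * ((k:ℝ)/d)^p := by
          refine Finset.sum_le_sum fun l _ => ?_
          rw [abs_mul, abs_mul, abs_pow, abs_neg, abs_one, one_pow, one_mul,
            Nat.abs_cast, abs_of_nonneg (Real.rpow_nonneg (by positivity) p)]
          refine mul_le_mul_of_nonneg_left ?_ (Nat.cast_nonneg _)
          refine Real.rpow_le_rpow (by positivity) ?_ hp
          gcongr
          exact_mod_cast Nat.sub_le k l
      _ = 2^k * ((k:ℝ)/d)^p := by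
          rw [← Finset.sum_mul]
          norm_cast
          rw [Nat.sum_range_choose]
  have hIoc : Finset.Ioc k d = Finset.Icc (k+1) d := (Finset.Icc_add_one_left_eq_Ioc k d).symm
  -- harmonic sum bound
  have hmap : (Finset.Icc 1 (d-k)).map (addRightEmbedding k) = Finset.Icc (k+1) d := by
    rw [Finset.map_add_right_Icc]
    congr 1 <;> omega
  have hharm : ∑ j ∈ Finset.Icc (k+1) d, ((j:ℝ)-(k:ℝ))⁻¹ ≤ 1 + Real.log d := by
    rw [← hmap, Finset.sum_map]
    have hre : ∀ i ∈ Finset.Icc 1 (d-k),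
        ((((addRightEmbedding k) i : ℕ):ℝ) - (k:ℝ))⁻¹ = ((i:ℕ):ℝ)⁻¹ := by
      intro i _
      simp only [addRightEmbedding_apply]
      congr 1
      push_cast
      ring
    rw [Finset.sum_congr rfl hre]
    have hcast : ∑ i ∈ Finset.Icc 1 (d-k), ((i:ℕ):ℝ)⁻¹ = ((harmonic (d-k) : ℚ) : ℝ) := by
      rw [harmonic_eq_sum_Icc]
      push_cast
      rfl
    rw [hcast]
    calc ((harmonic (d-k) : ℚ):ℝ) ≤ 1 + Real.log ((d-k:ℕ):ℝ) := harmonic_le_one_add_log _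
      _ ≤ 1 + Real.log d := by
          have h1 : (0:ℝ) < ((d-k:ℕ):ℝ) := by exact_mod_cast (by omega : 0 < d - k)
          have h2 : ((d-k:ℕ):ℝ) ≤ (d:ℝ) := by exact_mod_cast (by omega : d - k ≤ d)
          linarith [Real.log_le_log h1 h2]
  constructor
  · -- part (i)
    set p : ℝ := (2*(k:ℝ)-1)/2 with hp
    have hp0 : 0 ≤ p := by rw [hp]; linarith
    have hpk : p ≤ (k:ℝ) := by rw [hp]; linarith
    have hhead : (∑ l ∈ Finset.range (k+1),
        (-1:ℝ)^l * (k.choose l : ℝ) * (((k-l:ℕ):ℝ)/(d:ℝ))^p)^2 ≤ K0/Dd := by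
      have h1 := hj0 p hp0
      have h2 : (∑ l ∈ Finset.range (k+1),
          (-1:ℝ)^l * (k.choose l : ℝ) * (((k-l:ℕ):ℝ)/(d:ℝ))^p)^2
          ≤ (2^k * ((k:ℝ)/d)^p)^2 := by
        rw [← sq_abs]
        exact pow_le_pow_left₀ (abs_nonneg _) h1 2
      have h3 : (((k:ℝ)/d)^p)^2 = (k:ℝ)^(2*k-1)/(d:ℝ)^(2*k-1) := by
        rw [sq, ← Real.rpow_add (by positivity), show p + p = ((2*k-1:ℕ):ℝ) by
          rw [hc2k, hp]; ring, Real.rpow_natCast, div_pow]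
      have h4 : (k:ℝ)^(2*k-1) ≤ (2*(k:ℝ))^(2*k) :=
        le_trans (pow_le_pow_left₀ (by positivity) (by linarith) _)
          (pow_le_pow_right₀ (by linarith) (by omega))
      calc (∑ l ∈ Finset.range (k+1),
            (-1:ℝ)^l * (k.choose l : ℝ) * (((k-l:ℕ):ℝ)/(d:ℝ))^p)^2
          ≤ (2^k * ((k:ℝ)/d)^p)^2 := h2
        _ = 4^k * ((k:ℝ)^(2*k-1)/(d:ℝ)^(2*k-1)) := by
            have h24 : ((2:ℝ)^k)^2 = 4^k := by
              rw [← pow_mul, Nat.mul_comm k 2, pow_mul]; norm_num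
            rw [mul_pow, h3, h24]
        _ ≤ 4^k * ((2*(k:ℝ))^(2*k)/Dd) := by
            rw [hDd]
            apply mul_le_mul_of_nonneg_left _ (by positivity)
            exact (div_le_div_iff_of_pos_right (pow_pos hd0 _)).mpr h4
        _ = K0/Dd := by rw [hK0]; ring
    have htail : ∑ j ∈ Finset.Icc (k+1) d, (∑ l ∈ Finset.range (k+1),
        (-1:ℝ)^l * (k.choose l : ℝ) * (((j-l:ℕ):ℝ)/(d:ℝ))^p)^2
          ≤ A^2/Dd * (1 + Real.log d) := by
      calc ∑ j ∈ Finset.Icc (k+1) d, (∑ l ∈ Finset.range (k+1),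
          (-1:ℝ)^l * (k.choose l : ℝ) * (((j-l:ℕ):ℝ)/(d:ℝ))^p)^2
          ≤ ∑ j ∈ Finset.Icc (k+1) d, A^2 * ((j:ℝ)-(k:ℝ))⁻¹ / Dd := by
            refine Finset.sum_le_sum fun j hj => ?_
            refine (hinner p hpk j hj).trans (le_of_eq ?_)
            obtain ⟨hj1, hj2⟩ := Finset.mem_Icc.mp hj
            have ht : (0:ℝ) < (j:ℝ)-(k:ℝ) := by
              have : (k:ℝ) < j := by exact_mod_cast (by omega : k < j)
              linarith
            have h1 : (((j:ℝ)-(k:ℝ))^(p-(k:ℝ)))^2 = ((j:ℝ)-(k:ℝ))⁻¹ := by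
              rw [sq, ← Real.rpow_add ht, show (p - (k:ℝ)) + (p - (k:ℝ)) = -1 by
                rw [hp]; ring]
              exact Real.rpow_neg_one _
            have h2 : ((d:ℝ)^p)^2 = Dd := by
              rw [sq, ← Real.rpow_add hd0, show p + p = ((2*k-1:ℕ):ℝ) by
                rw [hc2k, hp]; ring, Real.rpow_natCast, hDd]
            rw [h1, h2, ← hA]
        _ = A^2/Dd * ∑ j ∈ Finset.Icc (k+1) d, ((j:ℝ)-(k:ℝ))⁻¹ := by
            rw [Finset.mul_sum]
            exact Finset.sum_congr rfl fun j _ => by ring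
        _ ≤ A^2/Dd * (1 + Real.log d) :=
            mul_le_mul_of_nonneg_left hharm (by positivity)
    rw [Finset.Icc_eq_cons_Ioc (by omega : k ≤ d), Finset.sum_cons, hIoc]
    calc (∑ l ∈ Finset.range (k+1),
          (-1:ℝ)^l * (k.choose l : ℝ) * (((k-l:ℕ):ℝ)/(d:ℝ))^p)^2
        + ∑ j ∈ Finset.Icc (k+1) d, (∑ l ∈ Finset.range (k+1),
          (-1:ℝ)^l * (k.choose l : ℝ) * (((j-l:ℕ):ℝ)/(d:ℝ))^p)^2
        ≤ K0/Dd + A^2/Dd * (1 + Real.log d) := add_le_add hhead htail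
      _ = (K0 + A^2 * (1 + Real.log d))/Dd := by ring
      _ ≤ ((K0 + A^2 + B^2 + 1) * (1 + Real.log d))/Dd := by
          apply (div_le_div_iff_of_pos_right hD0).mpr
          nlinarith [sq_nonneg A, sq_nonneg B]
      _ = (K0 + A^2 + B^2 + 1) * Real.log (Real.exp 1 * d) / Dd := by rw [hlogE]
  · -- part (ii)
    have hconv : ∀ j : ℕ, (∑ l ∈ Finset.range (k+1),
        (-1:ℝ)^l * (k.choose l:ℝ) * (((j-l:ℕ):ℝ)/(d:ℝ))^k)
        = ∑ l ∈ Finset.range (k+1),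
          (-1:ℝ)^l * (k.choose l:ℝ) * (((j-l:ℕ):ℝ)/(d:ℝ))^((k:ℕ):ℝ) := fun j =>
      Finset.sum_congr rfl fun l _ => by rw [Real.rpow_natCast]
    simp only [hconv]
    have hhead : (∑ l ∈ Finset.range (k+1),
        (-1:ℝ)^l * (k.choose l : ℝ) * (((k-l:ℕ):ℝ)/(d:ℝ))^((k:ℕ):ℝ))^2 ≤ K0/Dd := by
      have h1 := hj0 ((k:ℕ):ℝ) (by positivity)
      have h2 : (∑ l ∈ Finset.range (k+1),
          (-1:ℝ)^l * (k.choose l : ℝ) * (((k-l:ℕ):ℝ)/(d:ℝ))^((k:ℕ):ℝ))^2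
          ≤ (2^k * ((k:ℝ)/d)^((k:ℕ):ℝ))^2 := by
        rw [← sq_abs]
        exact pow_le_pow_left₀ (abs_nonneg _) h1 2
      have h3 : (((k:ℝ)/d)^((k:ℕ):ℝ))^2 = (k:ℝ)^(2*k)/(d:ℝ)^(2*k) := by
        rw [Real.rpow_natCast, ← pow_mul, Nat.mul_comm k 2, div_pow]
      calc (∑ l ∈ Finset.range (k+1),
            (-1:ℝ)^l * (k.choose l : ℝ) * (((k-l:ℕ):ℝ)/(d:ℝ))^((k:ℕ):ℝ))^2
          ≤ (2^k * ((k:ℝ)/d)^((k:ℕ):ℝ))^2 := h2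
        _ = 4^k * ((k:ℝ)^(2*k)/(d:ℝ)^(2*k)) := by
            have h24 : ((2:ℝ)^k)^2 = 4^k := by
              rw [← pow_mul, Nat.mul_comm k 2, pow_mul]; norm_num
            rw [mul_pow, h3, h24]
        _ ≤ 4^k * ((2*(k:ℝ))^(2*k)/Dd) := by
            apply mul_le_mul_of_nonneg_left _ (by positivity)
            apply div_le_div₀ (by positivity) (pow_le_pow_left₀ (by positivity) (by linarith) _)
              hD0
            rw [hDd]
            exact pow_le_pow_right₀ hd1 (by omega)
        _ = K0/Dd := by rw [hK0]; ring
    have htail : ∑ j ∈ Finset.Icc (k+1) d, (∑ l ∈ Finset.range (k+1),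
        (-1:ℝ)^l * (k.choose l : ℝ) * (((j-l:ℕ):ℝ)/(d:ℝ))^((k:ℕ):ℝ))^2
          ≤ B^2/Dd := by
      have hper : ∀ j ∈ Finset.Icc (k+1) d, (∑ l ∈ Finset.range (k+1),
          (-1:ℝ)^l * (k.choose l : ℝ) * (((j-l:ℕ):ℝ)/(d:ℝ))^((k:ℕ):ℝ))^2
            ≤ B^2/(d:ℝ)^(2*k) := by
        intro j hj
        refine (hinner ((k:ℕ):ℝ) le_rfl j hj).trans (le_of_eq ?_)
        have h1 : (((j:ℝ)-(k:ℝ))^(((k:ℕ):ℝ)-(k:ℝ)))^2 = 1 := by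
          rw [sub_self, Real.rpow_zero, one_pow]
        have h2 : ((d:ℝ)^((k:ℕ):ℝ))^2 = (d:ℝ)^(2*k) := by
          rw [Real.rpow_natCast, ← pow_mul, Nat.mul_comm k 2]
        rw [h1, h2, ← hB, mul_one]
      calc ∑ j ∈ Finset.Icc (k+1) d, (∑ l ∈ Finset.range (k+1),
          (-1:ℝ)^l * (k.choose l : ℝ) * (((j-l:ℕ):ℝ)/(d:ℝ))^((k:ℕ):ℝ))^2
          ≤ ∑ j ∈ Finset.Icc (k+1) d, B^2/(d:ℝ)^(2*k) := Finset.sum_le_sum hper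
        _ = ((d - k : ℕ):ℝ) * (B^2/(d:ℝ)^(2*k)) := by
            rw [Finset.sum_const, Nat.card_Icc, nsmul_eq_mul]
            congr 2
            omega
        _ ≤ (d:ℝ) * (B^2/(d:ℝ)^(2*k)) := by
            apply mul_le_mul_of_nonneg_right _ (by positivity)
            exact_mod_cast (by omega : d - k ≤ d)
        _ = B^2/Dd := by
            have hds : (d:ℝ)^(2*k) = Dd * d := by
              rw [hDd, ← pow_succ]
              congr 1
              omega
            rw [hds]
            field_simp
    rw [Finset.Icc_eq_cons_Ioc (by omega : k ≤ d), Finset.sum_cons, hIoc]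
    calc (∑ l ∈ Finset.range (k+1),
          (-1:ℝ)^l * (k.choose l : ℝ) * (((k-l:ℕ):ℝ)/(d:ℝ))^((k:ℕ):ℝ))^2
        + ∑ j ∈ Finset.Icc (k+1) d, (∑ l ∈ Finset.range (k+1),
          (-1:ℝ)^l * (k.choose l : ℝ) * (((j-l:ℕ):ℝ)/(d:ℝ))^((k:ℕ):ℝ))^2
        ≤ K0/Dd + B^2/Dd := add_le_add hhead htail
      _ = (K0 + B^2)/Dd := by ring
      _ ≤ (K0 + A^2 + B^2 + 1)/Dd := by
          apply (div_le_div_iff_of_pos_right hD0).mpr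
          nlinarith [sq_nonneg A]
end
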